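/- arXiv:1804.08223 — 6 statements merged into one kernel-verified Lean document; each statement's English description precedes it below -/
import Mathlib

section
/- Let $y_0 < y_1$ be real numbers, let $\varepsilon : \mathbb{R} \to \mathbb{R}$ be continuous on $[y_0, y_1]$, let $k_0, \alpha \in \mathbb{R}$, and let $\beta_+ > 0$ and $\beta_- \geq 0$ be real numbers. If $f : \mathbb{R} \to \mathbb{C}$ is twice continuously differentiable on $[y_0, y_1]$ and satisfies $f''(y) + (k_0^2 \varepsilon(y) - \alpha^2) f(y) = 0$ for all $y \in [y_0, y_1]$, together with the homogeneous Robin boundary conditions $f'(y_0) = -i\beta_- f(y_0)$ and $f'(y_1) = i\beta_+ f(y_1)$, then $f(y) = 0$ for all $y \in [y_0, y_1]$. -/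
open Set Complex

/-- Uniqueness for the homogeneous Robin boundary value problem
`f'' + (k₀²ε(y) - α²) f = 0` on `[y0,y1]` with `f'(y0) = -iβ₋ f(y0)`,
`f'(y1) = iβ₊ f(y1)`: only the trivial solution exists. -/
theorem robin_bvp_unique_trivial
    (y0 y1 : ℝ) (h01 : y0 < y1)
    (ε : ℝ → ℝ) (hε : ContinuousOn ε (Icc y0 y1))
    (k0 α βp βm : ℝ) (hβp : 0 < βp) (hβm : 0 ≤ βm)
    (f f' f'' : ℝ → ℂ)
    (hf' : ∀ y ∈ Icc y0 y1, HasDerivAt f (f' y) y)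
    (hf'' : ∀ y ∈ Icc y0 y1, HasDerivAt f' (f'' y) y)
    (hf''c : ContinuousOn f'' (Icc y0 y1))
    (hode : ∀ y ∈ Icc y0 y1, f'' y + ((k0 ^ 2 * ε y - α ^ 2 : ℝ) : ℂ) * f y = 0)
    (hbc0 : f' y0 = -Complex.I * (βm : ℂ) * f y0)
    (hbc1 : f' y1 = Complex.I * (βp : ℂ) * f y1) :
    ∀ y ∈ Icc y0 y1, f y = 0 := by
  set q : ℝ → ℝ := fun y => k0 ^ 2 * ε y - α ^ 2 with hqdef
  have hode' : ∀ y ∈ Icc y0 y1, f'' y = -((q y : ℂ)) * f y := by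
    intro y hy
    have h := hode y hy
    simp only [hqdef]
    push_cast
    push_cast at h
    linear_combination h
  have hfc : ContinuousOn f (Icc y0 y1) := fun y hy =>
    (hf' y hy).continuousAt.continuousWithinAt
  have hf'c : ContinuousOn f' (Icc y0 y1) := fun y hy =>
    (hf'' y hy).continuousAt.continuousWithinAt
  -- Step 1: `g y = Im (f' y * conj (f y))` is constant on the interval.
  set g : ℝ → ℝ := fun y => (f' y * star (f y)).im with hgdef
  have hgderiv : ∀ y ∈ Icc y0 y1, HasDerivAt g 0 y := by
    intro y hy
    have h1 : HasDerivAt (fun y => f' y * star (f y))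
        (f'' y * star (f y) + f' y * star (f' y)) y :=
      (hf'' y hy).mul ((hf' y hy).star)
    have h2 : HasDerivAt g ((f'' y * star (f y) + f' y * star (f' y)).im) y :=
      Complex.imCLM.hasFDerivAt.comp_hasDerivAt y h1
    have h3 : (f'' y * star (f y) + f' y * star (f' y)).im = 0 := by
      rw [hode' y hy]
      have e1 : -((q y : ℂ)) * f y * star (f y) = -((q y : ℂ)) * ((Complex.normSq (f y) : ℝ) : ℂ) := by
        rw [mul_assoc]
        congr 1
        simpa [Complex.star_def] using Complex.mul_conj (f y)
      have e2 : f' y * star (f' y) = ((Complex.normSq (f' y) : ℝ) : ℂ) := by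
        simpa [Complex.star_def] using Complex.mul_conj (f' y)
      rw [e1, e2]
      simp
    rw [h3] at h2
    exact h2
  have hgconst : ∀ x ∈ Icc y0 y1, g x = g y0 := by
    apply constant_of_has_deriv_right_zero
    · exact fun y hy => (hgderiv y hy).continuousAt.continuousWithinAt
    · intro x hx
      exact (hgderiv x (Ico_subset_Icc_self hx)).hasDerivWithinAt
  have hg1 : g y1 = βp * Complex.normSq (f y1) := by
    simp only [hgdef, hbc1, Complex.star_def]
    have : Complex.I * (βp : ℂ) * f y1 * (starRingEnd ℂ) (f y1)
        = Complex.I * (βp : ℂ) * ((Complex.normSq (f y1) : ℝ) : ℂ) := by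
      rw [mul_assoc, Complex.mul_conj]
    rw [this]
    simp [Complex.mul_im]
  have hg0 : g y0 = -(βm * Complex.normSq (f y0)) := by
    simp only [hgdef, hbc0, Complex.star_def]
    have : -Complex.I * (βm : ℂ) * f y0 * (starRingEnd ℂ) (f y0)
        = -Complex.I * (βm : ℂ) * ((Complex.normSq (f y0) : ℝ) : ℂ) := by
      rw [mul_assoc, Complex.mul_conj]
    rw [this]
    simp [Complex.mul_im]
  have hfy1 : f y1 = 0 := by
    have h := hgconst y1 ⟨h01.le, le_refl _⟩
    rw [hg1, hg0] at h
    have h1 := Complex.normSq_nonneg (f y0)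
    have h2 := Complex.normSq_nonneg (f y1)
    have : Complex.normSq (f y1) = 0 := by nlinarith
    exact Complex.normSq_eq_zero.mp this
  have hf'y1 : f' y1 = 0 := by rw [hbc1, hfy1, mul_zero]
  -- Step 2: backwards uniqueness for the first-order system (f, f').
  obtain ⟨C, hC⟩ : ∃ C : ℝ, ∀ y ∈ Icc y0 y1, |q y| ≤ C := by
    have hqc : ContinuousOn (fun y => |q y|) (Icc y0 y1) :=
      ((continuousOn_const.mul hε).sub continuousOn_const).abs
    obtain ⟨x, _, hx⟩ := isCompact_Icc.exists_isMaxOn (nonempty_Icc.mpr h01.le) hqc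
    exact ⟨|q x|, fun y hy => hx hy⟩
  set Q : ℝ → ℝ := fun t => q ((projIcc y0 y1 h01.le t : Icc y0 y1) : ℝ) with hQdef
  have hQbound : ∀ t : ℝ, |Q t| ≤ C := fun t => hC _ (projIcc y0 y1 h01.le t).2
  have hQeq : ∀ t ∈ Icc y0 y1, Q t = q t := by
    intro t ht
    simp [hQdef, projIcc_of_mem h01.le ht]
  set K : NNReal := Real.toNNReal (max 1 C) with hKdef
  have hK1 : (1 : ℝ) ≤ (K : ℝ) := by
    rw [hKdef, Real.coe_toNNReal _ (le_trans zero_le_one (le_max_left 1 C))]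
    exact le_max_left 1 C
  have hKC : C ≤ (K : ℝ) := by
    rw [hKdef, Real.coe_toNNReal _ (le_trans zero_le_one (le_max_left 1 C))]
    exact le_max_right 1 C
  set v : ℝ → ℂ × ℂ → ℂ × ℂ := fun t p => (p.2, -((Q t : ℂ)) * p.1) with hvdef
  have hv : ∀ t : ℝ, LipschitzWith K (v t) := by
    intro t
    apply LipschitzWith.of_dist_le_mul
    intro p p'
    rw [Prod.dist_eq, Prod.dist_eq]
    simp only [hvdef]
    have hd : dist (-((Q t : ℂ)) * p.1) (-((Q t : ℂ)) * p'.1) = |Q t| * dist p.1 p'.1 := by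
      rw [Complex.dist_eq, Complex.dist_eq, ← mul_sub, norm_mul]
      simp
    rw [hd]
    have h1 : dist p.2 p'.2 ≤ (K : ℝ) * max (dist p.1 p'.1) (dist p.2 p'.2) := by
      calc dist p.2 p'.2 ≤ max (dist p.1 p'.1) (dist p.2 p'.2) := le_max_right _ _
        _ = 1 * max (dist p.1 p'.1) (dist p.2 p'.2) := (one_mul _).symm
        _ ≤ (K : ℝ) * max (dist p.1 p'.1) (dist p.2 p'.2) := by
            apply mul_le_mul_of_nonneg_right hK1 (le_max_of_le_left dist_nonneg)
    have h2 : |Q t| * dist p.1 p'.1 ≤ (K : ℝ) * max (dist p.1 p'.1) (dist p.2 p'.2) := by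
      apply mul_le_mul (le_trans (hQbound t) hKC) (le_max_left _ _) dist_nonneg
      exact le_trans (le_trans zero_le_one hK1) le_rfl
    exact max_le h1 h2
  set F : ℝ → ℂ × ℂ := fun t => (f t, f' t) with hFdef
  have hF' : ∀ t ∈ Ioc y0 y1, HasDerivWithinAt F (v t (F t)) (Iic t) t := by
    intro t ht
    have ht' : t ∈ Icc y0 y1 := Ioc_subset_Icc_self ht
    have h1 : HasDerivAt F (f' t, f'' t) t := (hf' t ht').prodMk (hf'' t ht')
    have h2 : v t (F t) = (f' t, f'' t) := by
      simp only [hvdef, hFdef]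
      rw [hQeq t ht', ← hode' t ht']
    rw [h2]
    exact h1.hasDerivWithinAt
  have hG' : ∀ t ∈ Ioc y0 y1,
      HasDerivWithinAt (fun _ : ℝ => ((0 : ℂ), (0 : ℂ))) (v t ((0 : ℂ), (0 : ℂ))) (Iic t) t := by
    intro t ht
    have : v t ((0 : ℂ), (0 : ℂ)) = ((0 : ℂ), (0 : ℂ)) := by simp [hvdef]
    rw [this]
    exact (hasDerivAt_const t _).hasDerivWithinAt
  have huniq := ODE_solution_unique_of_mem_Icc_left (v := v) (s := fun _ => univ) (K := K)
    (fun t _ => (hv t).lipschitzOnWith)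
    (hfc.prodMk hf'c) hF' (fun _ _ => mem_univ _)
    continuousOn_const hG' (fun _ _ => mem_univ _)
    (by simp [hFdef, hfy1, hf'y1])
  intro y hy
  have h2 : f y = 0 ∧ f' y = 0 := by
    have := huniq hy
    simpa [hFdef, Prod.ext_iff] using this
  exact h2.1
end

section
/- Let $y_0 < y_1$ be real numbers, let $\varepsilon : \mathbb{R} \to \mathbb{R}$ be continuous on $[y_0, y_1]$, let $k_0, \alpha \in \mathbb{R}$, and let $\beta_+ > 0$ and $\beta_- \geq 0$ be real numbers. If $f : \mathbb{R} \to \mathbb{C}$ is twice continuously differentiable on $[y_0, y_1]$, satisfies $f''(y) + (k_0^2 \varepsilon(y) - \alpha^2) f(y) = 0$ for all $y \in [y_0, y_1]$, and satisfies $f'(y_0) = -i\beta_- f(y_0)$ and $f'(y_1) = i\beta_+ f(y_1)$, then $\beta_+ |f(y_1)|^2 + \beta_- |f(y_0)|^2 = 0$; in particular $f(y_1) = 0$ and $f'(y_1) = 0$. -/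
open Set Complex

/-- Energy step for the homogeneous Robin problem: multiplying the ODE by the
conjugate, integrating by parts and taking imaginary parts gives
`β₊|f(y1)|² + β₋|f(y0)|² = 0`; in particular `f(y1) = 0` and `f'(y1) = 0`. -/
theorem robin_bvp_energy_identity
    (y0 y1 : ℝ) (h01 : y0 < y1)
    (ε : ℝ → ℝ) (hε : ContinuousOn ε (Icc y0 y1))
    (k0 α βp βm : ℝ) (hβp : 0 < βp) (hβm : 0 ≤ βm)
    (f f' f'' : ℝ → ℂ)
    (hf' : ∀ y ∈ Icc y0 y1, HasDerivAt f (f' y) y)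
    (hf'' : ∀ y ∈ Icc y0 y1, HasDerivAt f' (f'' y) y)
    (hf''c : ContinuousOn f'' (Icc y0 y1))
    (hode : ∀ y ∈ Icc y0 y1, f'' y + ((k0 ^ 2 * ε y - α ^ 2 : ℝ) : ℂ) * f y = 0)
    (hbc0 : f' y0 = -Complex.I * (βm : ℂ) * f y0)
    (hbc1 : f' y1 = Complex.I * (βp : ℂ) * f y1) :
    βp * ‖f y1‖ ^ 2 + βm * ‖f y0‖ ^ 2 = 0 ∧
      f y1 = 0 ∧ f' y1 = 0 := by
  set F : ℝ → ℝ := fun y => ((starRingEnd ℂ) (f y) * f' y).im with hF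
  have hder : ∀ y ∈ Icc y0 y1, HasDerivAt F 0 y := by
    intro y hy
    have h1 : HasDerivAt (fun t => (starRingEnd ℂ) (f t)) ((starRingEnd ℂ) (f' y)) y := by
      exact (Complex.conjCLE.hasFDerivAt.comp_hasDerivAt y (hf' y hy))
    have h2 := h1.mul (hf'' y hy)
    have h3 := Complex.imCLM.hasFDerivAt.comp_hasDerivAt y h2
    have hfpp : f'' y = -(((k0 ^ 2 * ε y - α ^ 2 : ℝ) : ℂ) * f y) := by
      have := hode y hy; linear_combination this
    have hval : (Complex.imCLM ((starRingEnd ℂ) (f' y) * f' y +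
        (starRingEnd ℂ) (f y) * f'' y) : ℝ) = 0 := by
      simp [hfpp, Complex.mul_im, Complex.conj_re, Complex.conj_im, pow_two]
      ring
    rw [hval] at h3
    exact h3
  have hFc : ContinuousOn F (Icc y0 y1) :=
    fun y hy => (hder y hy).continuousAt.continuousWithinAt
  obtain ⟨c, hc, hslope⟩ := exists_hasDerivAt_eq_slope F (fun _ => 0) h01 hFc
    (fun x hx => hder x (Ioo_subset_Icc_self hx))
  have hFeq : F y1 = F y0 := by
    have hne : y1 - y0 ≠ 0 := sub_ne_zero.mpr h01.ne'
    field_simp at hslope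
    linarith [hslope]
  have hF0 : F y0 = -(βm * Complex.normSq (f y0)) := by
    simp [hF, hbc0, Complex.mul_im, Complex.conj_re, Complex.conj_im, Complex.normSq_apply]
    ring
  have hF1 : F y1 = βp * Complex.normSq (f y1) := by
    simp [hF, hbc1, Complex.mul_im, Complex.conj_re, Complex.conj_im, Complex.normSq_apply]
    ring
  have habs1 : ‖f y1‖ ^ 2 = Complex.normSq (f y1) := Complex.sq_norm _
  have habs0 : ‖f y0‖ ^ 2 = Complex.normSq (f y0) := Complex.sq_norm _
  have hsum : βp * Complex.normSq (f y1) + βm * Complex.normSq (f y0) = 0 := by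
    rw [hF1, hF0] at hFeq; linarith
  have h1nn : 0 ≤ βp * Complex.normSq (f y1) :=
    mul_nonneg hβp.le (Complex.normSq_nonneg _)
  have h0nn : 0 ≤ βm * Complex.normSq (f y0) :=
    mul_nonneg hβm (Complex.normSq_nonneg _)
  have hN1 : Complex.normSq (f y1) = 0 := by
    have : βp * Complex.normSq (f y1) = 0 := by linarith
    exact (mul_eq_zero.mp this).resolve_left hβp.ne'
  have hfy1 : f y1 = 0 := Complex.normSq_eq_zero.mp hN1
  refine ⟨by rw [habs0, habs1]; linarith, hfy1, by rw [hbc1, hfy1]; ring⟩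
end

section
/- Let $y_0 < y_1$ be real numbers, let $\varepsilon : \mathbb{R} \to \mathbb{R}$ be continuous on $[y_0, y_1]$, let $k_0, \alpha \in \mathbb{R}$, and let $\beta_+ > 0$ and $\beta_- \geq 0$ be real numbers. Then there exists exactly one function $f : [y_0, y_1] \to \mathbb{C}$ that is twice continuously differentiable on $[y_0, y_1]$ and satisfies the boundary value problem $f''(y) + (k_0^2 \varepsilon(y) - \alpha^2) f(y) = 0$ for all $y \in [y_0, y_1]$, $f'(y_0) = -i\beta_- f(y_0)$, and $f'(y_1) = i\beta_+ (f(y_1) - 2)$. -/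
open Set Complex NNReal

section ODEExistence

variable {E : Type*} [NormedAddCommGroup E] [NormedSpace ℝ E] [CompleteSpace E]

/-- One Picard–Lindelöf step for a linear vector field (uniform step size). -/
lemma linode_step (v : ℝ → E → E) (K : ℝ≥0)
    (hK : ∀ t, LipschitzWith K (v t)) (h0 : ∀ t, v t 0 = 0)
    (hc : ∀ x, Continuous fun t => v t x)
    (t₀ b : ℝ) (x₀ : E) (hb : t₀ ≤ b) (hδ : b - t₀ ≤ 1 / (2 * (K : ℝ) + 1)) :
    ∃ f : ℝ → E, f t₀ = x₀ ∧
      ∀ t ∈ Icc t₀ b, HasDerivWithinAt f (v t (f t)) (Icc t₀ b) t := by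
  have hKnn : (0 : ℝ) ≤ (K : ℝ) := K.coe_nonneg
  have hpl : IsPicardLindelof v (tmin := t₀) (tmax := b) ⟨t₀, le_refl _, hb⟩ x₀ (‖x₀‖₊ + 1) 0
      (K * (2 * ‖x₀‖₊ + 1)) K := by
    constructor
    · exact fun t _ => (hK t).lipschitzOnWith
    · exact fun x _ => (hc x).continuousOn
    · intro t _ x hx
      have h1 : ‖v t x‖ ≤ (K : ℝ) * ‖x‖ := by
        have := (hK t).dist_le_mul x 0
        simpa [h0 t, dist_eq_norm] using this
      have h2 : ‖x‖ ≤ 2 * ‖x₀‖ + 1 := by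
        have hx' := mem_closedBall_iff_norm.mp hx
        push_cast at hx'
        have := norm_sub_norm_le x x₀
        linarith
      push_cast
      calc ‖v t x‖ ≤ (K : ℝ) * ‖x‖ := h1
        _ ≤ (K : ℝ) * (2 * ‖x₀‖ + 1) := by nlinarith [norm_nonneg x]
    · have hmax : max (b - t₀) (t₀ - t₀) = b - t₀ := by
        simp
        linarith
      simp only [NNReal.coe_sub, NNReal.coe_zero, sub_zero]
      push_cast
      rw [hmax]
      have hpos : (0 : ℝ) < 2 * (K : ℝ) + 1 := by linarith
      have h1 : (b - t₀) * (2 * (K : ℝ) + 1) ≤ 1 := by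
        calc (b - t₀) * (2 * (K : ℝ) + 1) ≤ (1 / (2 * (K : ℝ) + 1)) * (2 * (K : ℝ) + 1) := by
              apply mul_le_mul_of_nonneg_right hδ hpos.le
          _ = 1 := by field_simp
      nlinarith [norm_nonneg x₀, sub_nonneg.mpr hb]
  obtain ⟨f, hf0, hf⟩ := hpl.exists_eq_forall_mem_Icc_hasDerivWithinAt₀
  exact ⟨f, hf0, hf⟩

/-- Glue two solutions agreeing at the junction. -/
lemma linode_glue (v : ℝ → E → E) {a b c : ℝ} (hab : a ≤ b) (hbc : b ≤ c)
    {f g : ℝ → E} (hfg : f b = g b)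
    (hf : ∀ t ∈ Icc a b, HasDerivWithinAt f (v t (f t)) (Icc a b) t)
    (hg : ∀ t ∈ Icc b c, HasDerivWithinAt g (v t (g t)) (Icc b c) t) :
    ∃ h : ℝ → E, EqOn h f (Icc a b) ∧ EqOn h g (Icc b c) ∧
      ∀ t ∈ Icc a c, HasDerivWithinAt h (v t (h t)) (Icc a c) t := by
  classical
  set h : ℝ → E := fun t => if t ≤ b then f t else g t with hh
  have heqf : EqOn h f (Icc a b) := fun t ht => by simp [hh, ht.2]
  have heqg : EqOn h g (Icc b c) := fun t ht => by
    by_cases h' : t ≤ b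
    · have : t = b := le_antisymm h' ht.1
      simp [hh, h', this, hfg]
    · simp [hh, h']
  refine ⟨h, heqf, heqg, ?_⟩
  intro t ht
  rcases lt_trichotomy t b with hlt | heq | hgt
  · have htm : t ∈ Icc a b := ⟨ht.1, hlt.le⟩
    have h1 : HasDerivWithinAt h (v t (h t)) (Icc a b) t := by
      have h1' := (hf t htm).congr (fun y hy => heqf hy) (heqf htm)
      convert h1' using 2
      exact heqf htm
    apply h1.mono_of_mem_nhdsWithin
    rw [mem_nhdsWithin]
    exact ⟨Iio b, isOpen_Iio, hlt, fun x hx => ⟨hx.2.1, hx.1.le⟩⟩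
  · subst heq
    have hbm : t ∈ Icc a t := ⟨ht.1, le_refl _⟩
    have hbm' : t ∈ Icc t c := ⟨le_refl _, ht.2⟩
    have h1 : HasDerivWithinAt h (v t (h t)) (Icc a t) t := by
      have h1' := (hf t hbm).congr (fun y hy => heqf hy) (heqf hbm)
      convert h1' using 2
      exact heqf hbm
    have h2 : HasDerivWithinAt h (v t (h t)) (Icc t c) t := by
      have h2' := (hg t hbm').congr (fun y hy => heqg hy) (heqg hbm')
      convert h2' using 2
      exact heqg hbm'
    have := h1.union h2
    rwa [Icc_union_Icc_eq_Icc hab hbc] at this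
  · have htm : t ∈ Icc b c := ⟨hgt.le, ht.2⟩
    have h1 : HasDerivWithinAt h (v t (h t)) (Icc b c) t := by
      have h1' := (hg t htm).congr (fun y hy => heqg hy) (heqg htm)
      convert h1' using 2
      exact heqg htm
    apply h1.mono_of_mem_nhdsWithin
    rw [mem_nhdsWithin]
    exact ⟨Ioi b, isOpen_Ioi, hgt, fun x hx => ⟨hx.1.le, hx.2.2⟩⟩

end ODEExistence

section Glob
variable {E : Type*} [NormedAddCommGroup E] [NormedSpace ℝ E] [CompleteSpace E]
set_option linter.unusedSectionVars false

lemma linode_forward (v : ℝ → E → E) (K : ℝ≥0)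
    (hK : ∀ t, LipschitzWith K (v t)) (h0 : ∀ t, v t 0 = 0)
    (hc : ∀ x, Continuous fun t => v t x) :
    ∀ n : ℕ, ∀ a b : ℝ, ∀ x₀ : E, a ≤ b → b ≤ a + n * (1 / (2 * (K : ℝ) + 1)) →
    ∃ f : ℝ → E, f a = x₀ ∧
      ∀ t ∈ Icc a b, HasDerivWithinAt f (v t (f t)) (Icc a b) t := by
  intro n
  induction n with
  | zero =>
    intro a b x₀ hab hn
    apply linode_step v K hK h0 hc a b x₀ hab
    have hpos : (0 : ℝ) < 1 / (2 * (K : ℝ) + 1) := by positivity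
    simp at hn
    linarith
  | succ n ih =>
    intro a b x₀ hab hn
    set δ : ℝ := 1 / (2 * (K : ℝ) + 1) with hδdef
    have hδpos : (0 : ℝ) < δ := by positivity
    by_cases hcase : b ≤ a + δ
    · exact linode_step v K hK h0 hc a b x₀ hab (by linarith)
    · push_neg at hcase
      obtain ⟨f, hf0, hf⟩ := linode_step v K hK h0 hc a (a + δ) x₀ (by linarith) (by linarith)
      obtain ⟨g, hg0, hg⟩ := ih (a + δ) b (f (a + δ)) (by linarith)
        (by push_cast at hn ⊢; linarith)
      obtain ⟨h, hhf, hhg, hh⟩ := linode_glue v (by linarith : a ≤ a + δ) hcase.le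
        hg0.symm hf hg
      refine ⟨h, ?_, hh⟩
      rw [hhf ⟨le_refl _, by linarith⟩, hf0]

lemma linode_forward' (v : ℝ → E → E) (K : ℝ≥0)
    (hK : ∀ t, LipschitzWith K (v t)) (h0 : ∀ t, v t 0 = 0)
    (hc : ∀ x, Continuous fun t => v t x)
    (c d : ℝ) (y₀ : E) (hcd : c ≤ d) :
    ∃ f : ℝ → E, f c = y₀ ∧
      ∀ t ∈ Icc c d, HasDerivWithinAt f (v t (f t)) (Icc c d) t := by
  set δ : ℝ := 1 / (2 * (K : ℝ) + 1) with hδdef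
  have hδpos : (0 : ℝ) < δ := by positivity
  refine linode_forward v K hK h0 hc ⌈(d - c) / δ⌉₊ c d y₀ hcd ?_
  have := Nat.le_ceil ((d - c) / δ)
  have h3 : d - c ≤ ⌈(d - c) / δ⌉₊ * δ := by
    rw [div_le_iff₀ hδpos] at this
    linarith
  linarith

lemma linode_ivp (v : ℝ → E → E) (K : ℝ≥0)
    (hK : ∀ t, LipschitzWith K (v t)) (h0 : ∀ t, v t 0 = 0)
    (hc : ∀ x, Continuous fun t => v t x)
    (a t₀ b : ℝ) (x₀ : E) (h1 : a ≤ t₀) (h2 : t₀ ≤ b) :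
    ∃ f : ℝ → E, f t₀ = x₀ ∧
      ∀ t ∈ Icc a b, HasDerivWithinAt f (v t (f t)) (Icc a b) t := by
  obtain ⟨fp, hfp0, hfp⟩ := linode_forward' v K hK h0 hc t₀ b x₀ h2
  -- backward part on [a, t₀] via time reversal
  set w : ℝ → E → E := fun s x => -v (a + t₀ - s) x with hwdef
  have hKw : ∀ s, LipschitzWith K (w s) := by
    intro s x y
    simpa [hwdef, edist_neg] using (hK (a + t₀ - s)) x y
  have h0w : ∀ s, w s 0 = 0 := by intro s; simp [hwdef, h0]
  have hcw : ∀ x, Continuous fun s => w s x := by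
    intro x
    exact ((hc x).comp (by continuity)).neg
  obtain ⟨g, hg0, hg⟩ := linode_forward' w K hKw h0w hcw a t₀ x₀ h1
  set fm : ℝ → E := fun t => g (a + t₀ - t) with hfmdef
  have hfm0 : fm t₀ = x₀ := by simp [hfmdef, hg0]
  have hfm : ∀ t ∈ Icc a t₀, HasDerivWithinAt fm (v t (fm t)) (Icc a t₀) t := by
    intro t ht
    have hmem : a + t₀ - t ∈ Icc a t₀ := ⟨by linarith [ht.2], by linarith [ht.1]⟩
    have hmaps : MapsTo (fun s : ℝ => a + t₀ - s) (Icc a t₀) (Icc a t₀) := by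
      intro s hs
      simp only [mem_Icc] at hs ⊢
      constructor <;> linarith [hs.1, hs.2]
    have hinner : HasDerivWithinAt (fun s : ℝ => a + t₀ - s) (-1) (Icc a t₀) t := by
      simpa using ((hasDerivAt_id t).const_sub (a + t₀)).hasDerivWithinAt
    have houter := hg (a + t₀ - t) hmem
    have hcomp := houter.scomp t hinner hmaps
    have : (-1 : ℝ) • w (a + t₀ - t) (g (a + t₀ - t)) = v t (fm t) := by
      simp [hwdef, hfmdef]
    rw [this] at hcomp
    exact hcomp
  obtain ⟨h, hhf, hhg, hh⟩ := linode_glue v h1 h2 (by rw [hfm0, hfp0]) hfm hfp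
  exact ⟨h, by rw [hhf ⟨h1, le_refl _⟩, hfm0], hh⟩

end Glob

section System

/-- The vector field of the first-order system associated to `u'' + q u = 0`. -/
noncomputable def sysV (q : ℝ → ℝ) : ℝ → ℂ × ℂ → ℂ × ℂ :=
  fun t p => (p.2, -(q t : ℂ) * p.1)

lemma sysV_lipschitz (q : ℝ → ℝ) (M : ℝ) (hM : ∀ t, |q t| ≤ M) (t : ℝ) :
    LipschitzWith (Real.toNNReal (max 1 M)) (sysV q t) := by
  apply LipschitzWith.of_dist_le_mul
  intro x y
  rw [Real.coe_toNNReal _ (le_trans zero_le_one (le_max_left 1 M))]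
  rw [Prod.dist_eq]
  rw [show dist x y = max (dist x.1 y.1) (dist x.2 y.2) from Prod.dist_eq]
  simp only [sysV, dist_eq_norm]
  have h1 : ‖-(q t : ℂ) * x.1 - -(q t : ℂ) * y.1‖ = |q t| * ‖x.1 - y.1‖ := by
    rw [show -(q t : ℂ) * x.1 - -(q t : ℂ) * y.1 = -(q t : ℂ) * (x.1 - y.1) by ring,
      norm_mul]
    simp [Complex.norm_real]
  have hM0 : (0:ℝ) ≤ M := le_trans (abs_nonneg _) (hM t)
  apply max_le
  · calc ‖x.2 - y.2‖ ≤ max ‖x.1 - y.1‖ ‖x.2 - y.2‖ := le_max_right _ _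
      _ ≤ max 1 M * max ‖x.1 - y.1‖ ‖x.2 - y.2‖ :=
        le_mul_of_one_le_left (le_max_of_le_left (norm_nonneg _)) (le_max_left 1 M)
  · rw [h1]
    exact mul_le_mul (le_max_of_le_right (hM t)) (le_max_left _ _) (norm_nonneg _)
      (le_trans zero_le_one (le_max_left 1 M))

lemma sysV_zero (q : ℝ → ℝ) (t : ℝ) : sysV q t 0 = 0 := by simp [sysV]

lemma sysV_cont (q : ℝ → ℝ) (hq : Continuous q) (x : ℂ × ℂ) :
    Continuous fun t => sysV q t x := by
  unfold sysV
  fun_prop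

/-- Existence for the scalar second-order IVP with data at an interior point. -/
lemma scalar_ivp (q : ℝ → ℝ) (hq : Continuous q) (M : ℝ) (hM : ∀ t, |q t| ≤ M)
    (a t₀ b : ℝ) (h1 : a < t₀) (h2 : t₀ < b) (c1 c2 : ℂ) :
    ∃ u u' : ℝ → ℂ, u t₀ = c1 ∧ u' t₀ = c2 ∧
      (∀ t ∈ Ioo a b, HasDerivAt u (u' t) t) ∧
      (∀ t ∈ Ioo a b, HasDerivAt u' (-(q t : ℂ) * u t) t) := by
  obtain ⟨F, hF0, hF⟩ := linode_ivp (sysV q) (Real.toNNReal (max 1 M))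
    (sysV_lipschitz q M hM) (sysV_zero q) (sysV_cont q hq) a t₀ b (c1, c2) h1.le h2.le
  have hFd : ∀ t ∈ Ioo a b, HasDerivAt F (sysV q t (F t)) t := fun t ht =>
    (hF t (Ioo_subset_Icc_self ht)).hasDerivAt (Icc_mem_nhds ht.1 ht.2)
  refine ⟨fun t => (F t).1, fun t => (F t).2, by simp [hF0], by simp [hF0], ?_, ?_⟩
  · intro t ht
    have := (ContinuousLinearMap.fst ℝ ℂ ℂ).hasFDerivAt.comp_hasDerivAt t (hFd t ht)
    exact this
  · intro t ht
    have := (ContinuousLinearMap.snd ℝ ℂ ℂ).hasFDerivAt.comp_hasDerivAt t (hFd t ht)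
    exact this

/-- Backward uniqueness: a solution vanishing together with its derivative at the right
endpoint vanishes identically. -/
lemma scalar_backward_unique (q : ℝ → ℝ) (hq : Continuous q) (M : ℝ) (hM : ∀ t, |q t| ≤ M)
    (y0 y1 : ℝ) (h01 : y0 ≤ y1) (f f' : ℝ → ℂ)
    (hd1 : ∀ t ∈ Icc y0 y1, HasDerivAt f (f' t) t)
    (hd2 : ∀ t ∈ Icc y0 y1, HasDerivAt f' (-(q t : ℂ) * f t) t)
    (hz : f y1 = 0) (hz' : f' y1 = 0) :
    ∀ t ∈ Icc y0 y1, f t = 0 ∧ f' t = 0 := by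
  set F : ℝ → ℂ × ℂ := fun t => (f t, f' t) with hFdef
  have hFd : ∀ t ∈ Icc y0 y1, HasDerivAt F (sysV q t (F t)) t := by
    intro t ht
    exact (hd1 t ht).prodMk (hd2 t ht)
  have hFc : ContinuousOn F (Icc y0 y1) := fun t ht =>
    ((hFd t ht).continuousAt).continuousWithinAt
  have hzero : EqOn F (fun _ => (0 : ℂ × ℂ)) (Icc y0 y1) := by
    apply ODE_solution_unique_of_mem_Icc_left
      (fun t _ => (sysV_lipschitz q M hM t).lipschitzOnWith (s := univ))
      hFc (fun t ht => (hFd t (Ioc_subset_Icc_self ht)).hasDerivWithinAt)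
      (fun t _ => mem_univ _) continuousOn_const
      (fun t ht => by simpa [sysV_zero] using (hasDerivWithinAt_const t _ (0 : ℂ × ℂ)))
      (fun t _ => mem_univ _)
    simp [hFdef, hz, hz']
  intro t ht
  have := hzero ht
  simp only [hFdef, Prod.ext_iff] at this
  exact this

end System

section Energy

/-- Energy argument: a solution of `f'' + q f = 0` (`q` real) satisfying homogeneous
Robin conditions with `Im`-definite coefficients vanishes identically. -/
lemma energy_zero (q : ℝ → ℝ) (hq : Continuous q) (M : ℝ) (hM : ∀ t, |q t| ≤ M)
    (y0 y1 : ℝ) (h01 : y0 ≤ y1)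
    (βp βm : ℝ) (hβp : 0 < βp) (hβm : 0 ≤ βm) (f f' : ℝ → ℂ)
    (hd1 : ∀ t ∈ Icc y0 y1, HasDerivAt f (f' t) t)
    (hd2 : ∀ t ∈ Icc y0 y1, HasDerivAt f' (-(q t : ℂ) * f t) t)
    (hbc0 : f' y0 = -Complex.I * (βm : ℂ) * f y0)
    (hbc1 : f' y1 = Complex.I * (βp : ℂ) * f y1) :
    ∀ t ∈ Icc y0 y1, f t = 0 ∧ f' t = 0 := by
  have hy0 : y0 ∈ Icc y0 y1 := ⟨le_refl _, h01⟩
  have hy1 : y1 ∈ Icc y0 y1 := ⟨h01, le_refl _⟩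
  set W : ℝ → ℂ := fun t => (starRingEnd ℂ) (f t) * f' t with hWdef
  have hconj : ∀ t ∈ Icc y0 y1,
      HasDerivAt (fun s => (starRingEnd ℂ) (f s)) ((starRingEnd ℂ) (f' t)) t := by
    intro t ht
    have := Complex.conjCLE.hasFDerivAt.comp_hasDerivAt t (hd1 t ht)
    exact this
  have hW : ∀ t ∈ Icc y0 y1, HasDerivAt W
      (((Complex.normSq (f' t) : ℝ) - q t * Complex.normSq (f t) : ℝ) : ℂ) t := by
    intro t ht
    have h := (hconj t ht).mul (hd2 t ht)
    have heq : (starRingEnd ℂ) (f' t) * f' t + (starRingEnd ℂ) (f t) * (-(q t : ℂ) * f t)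
        = (((Complex.normSq (f' t) : ℝ) - q t * Complex.normSq (f t) : ℝ) : ℂ) := by
      rw [show (starRingEnd ℂ) (f' t) * f' t = f' t * (starRingEnd ℂ) (f' t) by ring,
        show (starRingEnd ℂ) (f t) * (-(q t : ℂ) * f t)
          = -(q t : ℂ) * (f t * (starRingEnd ℂ) (f t)) by ring,
        Complex.mul_conj, Complex.mul_conj]
      push_cast
      ring
    rw [heq] at h
    exact h
  -- the imaginary part of W is constant
  set g : ℝ → ℝ := fun t => (W t).im with hgdef
  have hgconst : ∀ t ∈ Icc y0 y1, g t = g y0 := by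
    apply constant_of_has_deriv_right_zero
    · intro t ht
      exact (Complex.continuous_im.continuousAt.comp (hW t ht).continuousAt).continuousWithinAt
    · intro t ht
      have h := Complex.imCLM.hasFDerivAt.comp_hasDerivAt t (hW t (Ico_subset_Icc_self ht))
      have : Complex.imCLM ((((Complex.normSq (f' t) : ℝ)
          - q t * Complex.normSq (f t) : ℝ) : ℂ)) = 0 := by simp
      rw [this] at h
      exact h.hasDerivWithinAt
  have hkey : g y1 = g y0 := hgconst y1 hy1
  have hgy1 : g y1 = βp * Complex.normSq (f y1) := by
    have : W y1 = Complex.I * (βp : ℂ) * (Complex.normSq (f y1) : ℂ) := by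
      rw [hWdef]
      simp only
      rw [hbc1, show (starRingEnd ℂ) (f y1) * (Complex.I * (βp : ℂ) * f y1)
        = Complex.I * (βp : ℂ) * (f y1 * (starRingEnd ℂ) (f y1)) by ring, Complex.mul_conj]
    rw [hgdef]
    simp only [this]
    simp [Complex.mul_im]
  have hgy0 : g y0 = -(βm * Complex.normSq (f y0)) := by
    have : W y0 = -Complex.I * (βm : ℂ) * (Complex.normSq (f y0) : ℂ) := by
      rw [hWdef]
      simp only
      rw [hbc0, show (starRingEnd ℂ) (f y0) * (-Complex.I * (βm : ℂ) * f y0)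
        = -Complex.I * (βm : ℂ) * (f y0 * (starRingEnd ℂ) (f y0)) by ring, Complex.mul_conj]
    rw [hgdef]
    simp only [this]
    simp [Complex.mul_im]
  have hn1 : Complex.normSq (f y1) = 0 := by
    have h1 := Complex.normSq_nonneg (f y1)
    have h0 := Complex.normSq_nonneg (f y0)
    rw [hgy1, hgy0] at hkey
    nlinarith
  have hfy1 : f y1 = 0 := Complex.normSq_eq_zero.mp hn1
  have hfy1' : f' y1 = 0 := by rw [hbc1, hfy1, mul_zero]
  exact scalar_backward_unique q hq M hM y0 y1 h01 f f' hd1 hd2 hfy1 hfy1'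

end Energy

/-- `f` is a classical (twice continuously differentiable) solution of the
boundary value problem `f'' + (k₀²ε(y) - α²)f = 0` on `[y0, y1]`,
`f'(y0) = -iβ₋ f(y0)`, `f'(y1) = iβ₊ (f(y1) - 2)`. -/
def IsRobinBVPSol (y0 y1 k0 α βp βm : ℝ) (ε : ℝ → ℝ) (f : ℝ → ℂ) : Prop :=
  ∃ f' f'' : ℝ → ℂ,
    (∀ y ∈ Icc y0 y1, HasDerivAt f (f' y) y) ∧
    (∀ y ∈ Icc y0 y1, HasDerivAt f' (f'' y) y) ∧
    ContinuousOn f'' (Icc y0 y1) ∧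
    (∀ y ∈ Icc y0 y1, f'' y + ((k0 ^ 2 * ε y - α ^ 2 : ℝ) : ℂ) * f y = 0) ∧
    f' y0 = -Complex.I * (βm : ℂ) * f y0 ∧
    f' y1 = Complex.I * (βp : ℂ) * (f y1 - 2)

/-- The inhomogeneous Robin boundary value problem of Proposition A.2 has a
solution, and any two solutions coincide on `[y0, y1]`. -/
theorem robin_bvp_exists_unique
    (y0 y1 : ℝ) (h01 : y0 < y1)
    (ε : ℝ → ℝ) (hε : ContinuousOn ε (Icc y0 y1))
    (k0 α βp βm : ℝ) (hβp : 0 < βp) (hβm : 0 ≤ βm) :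
    (∃ f : ℝ → ℂ, IsRobinBVPSol y0 y1 k0 α βp βm ε f) ∧
      (∀ f g : ℝ → ℂ, IsRobinBVPSol y0 y1 k0 α βp βm ε f →
        IsRobinBVPSol y0 y1 k0 α βp βm ε g → EqOn f g (Icc y0 y1)) := by
  have h01' : y0 ≤ y1 := h01.le
  set q : ℝ → ℝ := fun t => k0 ^ 2 * ε ((projIcc y0 y1 h01' t : ℝ)) - α ^ 2 with hqdef
  have hproj : Continuous fun t : ℝ => ((projIcc y0 y1 h01' t : ℝ)) :=
    continuous_subtype_val.comp (continuous_projIcc)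
  have hqc : Continuous q := by
    apply Continuous.sub _ continuous_const
    exact continuous_const.mul
      (hε.comp_continuous hproj (fun x => (projIcc y0 y1 h01' x).2))
  have hqIcc : ∀ y ∈ Icc y0 y1, (q y : ℂ) = ((k0 ^ 2 * ε y - α ^ 2 : ℝ) : ℂ) := by
    intro y hy
    rw [hqdef]
    simp [projIcc_of_mem h01' hy]
  obtain ⟨M0, hM0⟩ := isCompact_Icc.exists_bound_of_continuousOn hε
  set M : ℝ := k0 ^ 2 * M0 + α ^ 2 with hMdef
  have hM : ∀ t, |q t| ≤ M := by
    intro t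
    have h1 : |ε ((projIcc y0 y1 h01' t : ℝ))| ≤ M0 := by
      have := hM0 _ (projIcc y0 y1 h01' t).2
      rwa [Real.norm_eq_abs] at this
    have h2 : |q t| ≤ |k0 ^ 2 * ε ((projIcc y0 y1 h01' t : ℝ))| + |α ^ 2| := by
      rw [hqdef]
      have := abs_add_le (k0 ^ 2 * ε ((projIcc y0 y1 h01' t : ℝ))) (-(α ^ 2))
      rw [abs_neg] at this
      simpa [sub_eq_add_neg] using this
    have h3 : |k0 ^ 2 * ε ((projIcc y0 y1 h01' t : ℝ))|
        = k0 ^ 2 * |ε ((projIcc y0 y1 h01' t : ℝ))| := by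
      rw [abs_mul, _root_.abs_of_nonneg (sq_nonneg k0)]
    have h4 : k0 ^ 2 * |ε ((projIcc y0 y1 h01' t : ℝ))| ≤ k0 ^ 2 * M0 :=
      mul_le_mul_of_nonneg_left h1 (sq_nonneg k0)
    have h5 : |α ^ 2| = α ^ 2 := _root_.abs_of_nonneg (sq_nonneg α)
    rw [hMdef]
    rw [h3, h5] at h2
    linarith
  -- basis solution with the left boundary condition
  obtain ⟨u, u', hu0, hu'0, hud1, hud2⟩ := scalar_ivp q hqc M hM (y0 - 1) y0 (y1 + 1)
    (by linarith) (by linarith) 1 (-Complex.I * (βm : ℂ))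
  have hsub : Icc y0 y1 ⊆ Ioo (y0 - 1) (y1 + 1) := fun t ht =>
    ⟨by linarith [ht.1], by linarith [ht.2]⟩
  have hud1' : ∀ y ∈ Icc y0 y1, HasDerivAt u (u' y) y := fun y hy => hud1 y (hsub hy)
  have hud2' : ∀ y ∈ Icc y0 y1, HasDerivAt u' (-(q y : ℂ) * u y) y := fun y hy =>
    hud2 y (hsub hy)
  have hD : u' y1 - Complex.I * (βp : ℂ) * u y1 ≠ 0 := by
    intro hD0
    rw [sub_eq_zero] at hD0
    have hbc0 : u' y0 = -Complex.I * (βm : ℂ) * u y0 := by rw [hu0, hu'0, mul_one]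
    have := energy_zero q hqc M hM y0 y1 h01' βp βm hβp hβm u u' hud1' hud2' hbc0 hD0
      y0 ⟨le_refl _, h01'⟩
    rw [hu0] at this
    exact one_ne_zero this.1
  constructor
  · -- existence
    set c : ℂ := (-2 * Complex.I * (βp : ℂ)) / (u' y1 - Complex.I * (βp : ℂ) * u y1)
      with hcdef
    have hcD : c * (u' y1 - Complex.I * (βp : ℂ) * u y1) = -2 * Complex.I * (βp : ℂ) :=
      div_mul_cancel₀ _ hD
    refine ⟨fun t => c * u t, fun t => c * u' t, fun t => c * (-(q t : ℂ) * u t),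
      fun y hy => (hud1' y hy).const_mul c, fun y hy => (hud2' y hy).const_mul c, ?_, ?_, ?_, ?_⟩
    · exact continuousOn_const.mul
        (((Complex.continuous_ofReal.comp hqc).continuousOn.neg).mul
          (fun y hy => (hud1' y hy).continuousAt.continuousWithinAt))
    · intro y hy
      rw [← hqIcc y hy]
      ring
    · show c * u' y0 = -Complex.I * (βm : ℂ) * (c * u y0)
      rw [hu0, hu'0]
      ring
    · show c * u' y1 = Complex.I * (βp : ℂ) * (c * u y1 - 2)
      have hrw : c * u' y1
          = c * (u' y1 - Complex.I * (βp : ℂ) * u y1) + Complex.I * (βp : ℂ) * (c * u y1) := by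
        ring
      rw [hrw, hcD]
      ring
  · -- uniqueness
    intro f g hf hg
    obtain ⟨f', f'', hfd1, hfd2, _, hfode, hfbc0, hfbc1⟩ := hf
    obtain ⟨g', g'', hgd1, hgd2, _, hgode, hgbc0, hgbc1⟩ := hg
    have hd1 : ∀ y ∈ Icc y0 y1, HasDerivAt (fun t => f t - g t) (f' y - g' y) y :=
      fun y hy => (hfd1 y hy).sub (hgd1 y hy)
    have hd2 : ∀ y ∈ Icc y0 y1,
        HasDerivAt (fun t => f' t - g' t) (-(q y : ℂ) * (f y - g y)) y := by
      intro y hy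
      have h := (hfd2 y hy).sub (hgd2 y hy)
      have heq : f'' y - g'' y = -(q y : ℂ) * (f y - g y) := by
        rw [hqIcc y hy]
        linear_combination (hfode y hy) - (hgode y hy)
      rwa [heq] at h
    have hbc0 : f' y0 - g' y0 = -Complex.I * (βm : ℂ) * (f y0 - g y0) := by
      rw [hfbc0, hgbc0]; ring
    have hbc1 : f' y1 - g' y1 = Complex.I * (βp : ℂ) * (f y1 - g y1) := by
      rw [hfbc1, hgbc1]; ring
    have hz := energy_zero q hqc M hM y0 y1 h01' βp βm hβp hβm
      (fun t => f t - g t) (fun t => f' t - g' t) hd1 hd2 hbc0 hbc1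
    intro t ht
    have := (hz t ht).1
    exact sub_eq_zero.mp this
end

section
/- Let $y_0 \leq 0 \leq y_1$ with $y_0 < y_1$, let $k_0 > 0$, $\varepsilon_+ > 0$, $\varepsilon_- > 0$, and let $\alpha \in \mathbb{R}$ satisfy $\alpha^2 < k_0^2 \varepsilon_+$ and $\alpha^2 \leq k_0^2 \varepsilon_-$. Set $\beta_+ = \sqrt{k_0^2\varepsilon_+ - \alpha^2} > 0$ and $\beta_- = \sqrt{k_0^2\varepsilon_- - \alpha^2} \geq 0$. Let $\tilde\varepsilon : \mathbb{R} \to \mathbb{R}$ be continuous on $[y_0, y_1]$ and let $f$ be twice continuously differentiable on $[y_0,y_1]$ with $f'' + (k_0^2\tilde\varepsilon(y) - \alpha^2)f = 0$ on $[y_0,y_1]$, $f'(y_0) = -i\beta_- f(y_0)$, and $f'(y_1) = i\beta_+(f(y_1) - 2)$. Define $R_2 = f(y_1) - 1$, $T_2 = f(y_0)$, and define $u : \mathbb{R}^2 \to \mathbb{C}$ by $u(x,y) = e^{-i\beta_+ y_1} e^{i\alpha x}\big(e^{-i\beta_+(y - y_1)} + R_2 e^{i\beta_+(y - y_1)}\big)$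 for $y \geq y_1$, $u(x,y) = e^{-i\beta_+ y_1} e^{i\alpha x} f(y)$ for $y_0 < y < y_1$, and $u(x,y) = e^{-i\beta_+ y_1} T_2\, e^{i(\alpha x - \beta_-(y - y_0))}$ for $y \leq y_0$. Then: (i) $u$ is continuous on $\mathbb{R}^2$; (ii) the partial derivative $\partial_y u$ extends continuously across the lines $y = y_0$ and $y = y_1$ (i.e.\ the one-sided limits of $\partial_y u$ from above and below agree on these lines); (iii) $\partial_x^2 u + \partial_y^2 u + k_0^2 \varepsilon_+ u = 0$ for $y > y_1$, $\partial_x^2 u + \partial_y^2 u + k_0^2 \tilde\varepsilon(y) u = 0$ for $y_0 < y < y_1$, and $\partial_x^2 u + \partial_y^2 u + k_0^2 \varepsilon_- u = 0$ for $y < y_0$. -/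
open Set Complex Filter Topology

lemma hd_cexp {e : ℝ → ℝ} {a : ℝ} (s : ℂ) {y : ℝ} (he : HasDerivAt e a y) :
    HasDerivAt (fun t : ℝ => Complex.exp (s * ((e t : ℝ) : ℂ)))
      (s * (a : ℂ) * Complex.exp (s * ((e y : ℝ) : ℂ))) y := by
  have h1 : HasDerivAt (fun t : ℝ => ((e t : ℝ) : ℂ)) ((a : ℝ) : ℂ) y := he.ofReal_comp
  have h2 := (h1.const_mul s).cexp
  convert h2 using 1
  ring

lemma iteratedDeriv2_eq {g g1 : ℝ → ℂ} {L : ℂ} {x : ℝ}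
    (h1 : ∀ᶠ t in nhds x, HasDerivAt g (g1 t) t) (h2 : HasDerivAt g1 L x) :
    iteratedDeriv 2 g x = L := by
  rw [show (2:ℕ) = 1 + 1 from rfl, iteratedDeriv_succ, iteratedDeriv_one]
  have hd : deriv g =ᶠ[nhds x] g1 := h1.mono fun t ht => ht.deriv
  rw [hd.deriv_eq]
  exact h2.deriv

/-- Proposition A.2 (verification part): the piecewise field built from the
solution `f` of the Robin boundary value problem, with `R₂ = f(y₁) - 1` and
`T₂ = f(y₀)`, is continuous, its normal derivative extends continuously across
the interfaces `y = y₀`, `y = y₁`, and it solves the layered Helmholtz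
equation in each open layer. -/
theorem three_layer_reference_field
    (y0 y1 : ℝ) (hy0 : y0 ≤ 0) (hy1 : 0 ≤ y1) (h01 : y0 < y1)
    (k0 εp εm α : ℝ) (hk0 : 0 < k0) (hεp : 0 < εp) (hεm : 0 < εm)
    (hαp : α ^ 2 < k0 ^ 2 * εp) (hαm : α ^ 2 ≤ k0 ^ 2 * εm)
    (βp βm : ℝ) (hβp : βp = Real.sqrt (k0 ^ 2 * εp - α ^ 2))
    (hβm : βm = Real.sqrt (k0 ^ 2 * εm - α ^ 2))
    (εt : ℝ → ℝ) (hεt : ContinuousOn εt (Icc y0 y1))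
    (f f' f'' : ℝ → ℂ)
    (hf' : ∀ y ∈ Icc y0 y1, HasDerivAt f (f' y) y)
    (hf'' : ∀ y ∈ Icc y0 y1, HasDerivAt f' (f'' y) y)
    (hf''c : ContinuousOn f'' (Icc y0 y1))
    (hode : ∀ y ∈ Icc y0 y1, f'' y + ((k0 ^ 2 * εt y - α ^ 2 : ℝ) : ℂ) * f y = 0)
    (hbc0 : f' y0 = -Complex.I * (βm : ℂ) * f y0)
    (hbc1 : f' y1 = Complex.I * (βp : ℂ) * (f y1 - 2))
    (R2 T2 : ℂ) (hR2 : R2 = f y1 - 1) (hT2 : T2 = f y0)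
    (u : ℝ → ℝ → ℂ)
    (hu : u = fun x y =>
      if y1 ≤ y then
        Complex.exp (-Complex.I * ((βp * y1 : ℝ) : ℂ)) *
          (Complex.exp (Complex.I * ((α * x : ℝ) : ℂ)) *
            (Complex.exp (-Complex.I * ((βp * (y - y1) : ℝ) : ℂ)) +
              R2 * Complex.exp (Complex.I * ((βp * (y - y1) : ℝ) : ℂ))))
      else if y0 < y then
        Complex.exp (-Complex.I * ((βp * y1 : ℝ) : ℂ)) *
          (Complex.exp (Complex.I * ((α * x : ℝ) : ℂ)) * f y)
      else
        Complex.exp (-Complex.I * ((βp * y1 : ℝ) : ℂ)) *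
          (T2 * Complex.exp (Complex.I * ((α * x - βm * (y - y0) : ℝ) : ℂ)))) :
    -- (i) continuity on ℝ²
    Continuous (fun p : ℝ × ℝ => u p.1 p.2) ∧
    -- (ii) the one-sided limits of ∂_y u from above and below agree on y = y₀ and y = y₁
    (∀ x : ℝ, ∃ Lmt : ℂ,
      Tendsto (fun y => deriv (fun t => u x t) y) (nhdsWithin y0 (Ioi y0)) (nhds Lmt) ∧
      Tendsto (fun y => deriv (fun t => u x t) y) (nhdsWithin y0 (Iio y0)) (nhds Lmt)) ∧
    (∀ x : ℝ, ∃ Lmt : ℂ,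
      Tendsto (fun y => deriv (fun t => u x t) y) (nhdsWithin y1 (Ioi y1)) (nhds Lmt) ∧
      Tendsto (fun y => deriv (fun t => u x t) y) (nhdsWithin y1 (Iio y1)) (nhds Lmt)) ∧
    -- (iii) Helmholtz equation in each open layer
    (∀ x y : ℝ, y1 < y →
      iteratedDeriv 2 (fun t => u t y) x + iteratedDeriv 2 (fun t => u x t) y +
        ((k0 ^ 2 * εp : ℝ) : ℂ) * u x y = 0) ∧
    (∀ x y : ℝ, y0 < y → y < y1 →
      iteratedDeriv 2 (fun t => u t y) x + iteratedDeriv 2 (fun t => u x t) y +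
        ((k0 ^ 2 * εt y : ℝ) : ℂ) * u x y = 0) ∧
    (∀ x y : ℝ, y < y0 →
      iteratedDeriv 2 (fun t => u t y) x + iteratedDeriv 2 (fun t => u x t) y +
        ((k0 ^ 2 * εm : ℝ) : ℂ) * u x y = 0) := by
  -- abbreviations
  set P : ℂ := Complex.exp (-Complex.I * ((βp * y1 : ℝ) : ℂ)) with hP
  -- pointwise descriptions of u
  have hutop : ∀ x y : ℝ, y1 ≤ y → u x y =
      P * (Complex.exp (Complex.I * ((α * x : ℝ) : ℂ)) *
        (Complex.exp (-Complex.I * ((βp * (y - y1) : ℝ) : ℂ)) +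
          R2 * Complex.exp (Complex.I * ((βp * (y - y1) : ℝ) : ℂ)))) := by
    intro x y h; rw [hu]; simp only [if_pos h]
  have humid : ∀ x y : ℝ, y0 < y → y < y1 → u x y =
      P * (Complex.exp (Complex.I * ((α * x : ℝ) : ℂ)) * f y) := by
    intro x y h h'; rw [hu]; simp only [if_neg (not_le.mpr h'), if_pos h]
  have hubot : ∀ x y : ℝ, y ≤ y0 → u x y =
      P * (T2 * Complex.exp (Complex.I * ((α * x - βm * (y - y0) : ℝ) : ℂ))) := by
    intro x y h; rw [hu]
    simp only [if_neg (not_le.mpr (lt_of_le_of_lt h h01)), if_neg (not_lt.mpr h)]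
  -- squares of the propagation constants
  have hβp2 : βp ^ 2 = k0 ^ 2 * εp - α ^ 2 := by
    rw [hβp]; exact Real.sq_sqrt (by linarith)
  have hβm2 : βm ^ 2 = k0 ^ 2 * εm - α ^ 2 := by
    rw [hβm]; exact Real.sq_sqrt (by linarith)
  have hcp : ((k0 ^ 2 * εp : ℝ) : ℂ) = (βp : ℂ) ^ 2 + (α : ℂ) ^ 2 := by
    rw [show k0 ^ 2 * εp = βp ^ 2 + α ^ 2 by linarith]; push_cast; ring
  have hcm : ((k0 ^ 2 * εm : ℝ) : ℂ) = (βm : ℂ) ^ 2 + (α : ℂ) ^ 2 := by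
    rw [show k0 ^ 2 * εm = βm ^ 2 + α ^ 2 by linarith]; push_cast; ring
  -- elementary derivative facts
  have hex : ∀ x t : ℝ, HasDerivAt
      (fun t : ℝ => Complex.exp (Complex.I * ((α * t : ℝ) : ℂ)))
      (Complex.I * (α : ℂ) * Complex.exp (Complex.I * ((α * t : ℝ) : ℂ))) t := by
    intro x t
    exact hd_cexp Complex.I (by simpa using (hasDerivAt_id t).const_mul α)
  have hE1 : ∀ t : ℝ, HasDerivAt
      (fun t : ℝ => Complex.exp (-Complex.I * ((βp * (t - y1) : ℝ) : ℂ)))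
      (-Complex.I * (βp : ℂ) * Complex.exp (-Complex.I * ((βp * (t - y1) : ℝ) : ℂ))) t := by
    intro t
    exact hd_cexp (-Complex.I) (by simpa using ((hasDerivAt_id t).sub_const y1).const_mul βp)
  have hE2 : ∀ t : ℝ, HasDerivAt
      (fun t : ℝ => Complex.exp (Complex.I * ((βp * (t - y1) : ℝ) : ℂ)))
      (Complex.I * (βp : ℂ) * Complex.exp (Complex.I * ((βp * (t - y1) : ℝ) : ℂ))) t := by
    intro t
    exact hd_cexp Complex.I (by simpa using ((hasDerivAt_id t).sub_const y1).const_mul βp)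
  have hEm : ∀ x t : ℝ, HasDerivAt
      (fun t : ℝ => Complex.exp (Complex.I * ((α * x - βm * (t - y0) : ℝ) : ℂ)))
      (Complex.I * ((-βm : ℝ) : ℂ) *
        Complex.exp (Complex.I * ((α * x - βm * (t - y0) : ℝ) : ℂ))) t := by
    intro x t
    refine hd_cexp Complex.I ?_
    have := (((hasDerivAt_id t).sub_const y0).const_mul βm).const_sub (α * x)
    simpa using this
  -- derivative of u in the middle region
  have hmidd : ∀ x : ℝ, ∀ y ∈ Ioo y0 y1,
      HasDerivAt (fun t => u x t)
        (P * Complex.exp (Complex.I * ((α * x : ℝ) : ℂ)) * f' y) y := by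
    intro x y hy
    have hev : (fun t => u x t) =ᶠ[nhds y]
        fun t => P * Complex.exp (Complex.I * ((α * x : ℝ) : ℂ)) * f t := by
      filter_upwards [Ioo_mem_nhds hy.1 hy.2] with t ht
      rw [humid x t ht.1 ht.2]; ring
    exact ((hf' y (Ioo_subset_Icc_self hy)).const_mul
      (P * Complex.exp (Complex.I * ((α * x : ℝ) : ℂ)))).congr_of_eventuallyEq hev
  -- derivative of u in the top region
  have htopd : ∀ x : ℝ, ∀ y : ℝ, y1 < y →
      HasDerivAt (fun t => u x t)
        (P * (Complex.exp (Complex.I * ((α * x : ℝ) : ℂ)) *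
          (-Complex.I * (βp : ℂ) * Complex.exp (-Complex.I * ((βp * (y - y1) : ℝ) : ℂ)) +
            R2 * (Complex.I * (βp : ℂ) *
              Complex.exp (Complex.I * ((βp * (y - y1) : ℝ) : ℂ)))))) y := by
    intro x y hy
    have hev : (fun t => u x t) =ᶠ[nhds y]
        fun t => P * (Complex.exp (Complex.I * ((α * x : ℝ) : ℂ)) *
          (Complex.exp (-Complex.I * ((βp * (t - y1) : ℝ) : ℂ)) +
            R2 * Complex.exp (Complex.I * ((βp * (t - y1) : ℝ) : ℂ)))) := by
      filter_upwards [Ioi_mem_nhds hy] with t ht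
      exact hutop x t ht.le
    exact ((((hE1 y).add ((hE2 y).const_mul R2)).const_mul
      (Complex.exp (Complex.I * ((α * x : ℝ) : ℂ)))).const_mul P).congr_of_eventuallyEq hev
  -- derivative of u in the bottom region
  have hbotd : ∀ x : ℝ, ∀ y : ℝ, y < y0 →
      HasDerivAt (fun t => u x t)
        (P * (T2 * (Complex.I * ((-βm : ℝ) : ℂ) *
          Complex.exp (Complex.I * ((α * x - βm * (y - y0) : ℝ) : ℂ))))) y := by
    intro x y hy
    have hev : (fun t => u x t) =ᶠ[nhds y]
        fun t => P * (T2 * Complex.exp (Complex.I * ((α * x - βm * (t - y0) : ℝ) : ℂ))) := by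
      filter_upwards [Iio_mem_nhds hy] with t ht
      exact hubot x t ht.le
    exact (((hEm x y).const_mul T2).const_mul P).congr_of_eventuallyEq hev
  refine ⟨?_, ?_, ?_, ?_, ?_, ?_⟩
  · -- (i) continuity
    have hfc : ContinuousOn f (Icc y0 y1) := fun z hz =>
      ((hf' z hz).continuousAt).continuousWithinAt
    have hclamp : Continuous fun z : ℝ => max y0 (min z y1) := by fun_prop
    have hmem : ∀ z : ℝ, max y0 (min z y1) ∈ Icc y0 y1 := fun z =>
      ⟨le_max_left _ _, max_le h01.le (min_le_right _ _)⟩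
    have hfcl : Continuous fun z : ℝ => f (max y0 (min z y1)) :=
      hfc.comp_continuous hclamp hmem
    have hFp : Continuous fun p : ℝ × ℝ =>
        P * (Complex.exp (Complex.I * ((α * p.1 : ℝ) : ℂ)) *
          (Complex.exp (-Complex.I * ((βp * (p.2 - y1) : ℝ) : ℂ)) +
            R2 * Complex.exp (Complex.I * ((βp * (p.2 - y1) : ℝ) : ℂ)))) := by fun_prop
    have hF0 : Continuous fun p : ℝ × ℝ =>
        P * (Complex.exp (Complex.I * ((α * p.1 : ℝ) : ℂ)) * f (max y0 (min p.2 y1))) := by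
      exact continuous_const.mul ((by fun_prop : Continuous fun p : ℝ × ℝ =>
        Complex.exp (Complex.I * ((α * p.1 : ℝ) : ℂ))).mul (hfcl.comp continuous_snd))
    have hFm : Continuous fun p : ℝ × ℝ =>
        P * (T2 * Complex.exp (Complex.I * ((α * p.1 - βm * (p.2 - y0) : ℝ) : ℂ))) := by
      fun_prop
    have hG : Continuous fun p : ℝ × ℝ =>
        if y1 ≤ p.2 then
          P * (Complex.exp (Complex.I * ((α * p.1 : ℝ) : ℂ)) *
            (Complex.exp (-Complex.I * ((βp * (p.2 - y1) : ℝ) : ℂ)) +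
              R2 * Complex.exp (Complex.I * ((βp * (p.2 - y1) : ℝ) : ℂ))))
        else P * (Complex.exp (Complex.I * ((α * p.1 : ℝ) : ℂ)) * f (max y0 (min p.2 y1))) := by
      refine Continuous.if_le hFp hF0 continuous_const continuous_snd ?_
      intro p hp
      rw [← hp]
      simp only [sub_self, mul_zero, Complex.ofReal_zero, Complex.exp_zero, mul_one,
        min_self, max_eq_right h01.le, hR2]
      ring
    have hcont : Continuous fun p : ℝ × ℝ =>
        if p.2 ≤ y0 then
          P * (T2 * Complex.exp (Complex.I * ((α * p.1 - βm * (p.2 - y0) : ℝ) : ℂ)))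
        else if y1 ≤ p.2 then
          P * (Complex.exp (Complex.I * ((α * p.1 : ℝ) : ℂ)) *
            (Complex.exp (-Complex.I * ((βp * (p.2 - y1) : ℝ) : ℂ)) +
              R2 * Complex.exp (Complex.I * ((βp * (p.2 - y1) : ℝ) : ℂ))))
        else P * (Complex.exp (Complex.I * ((α * p.1 : ℝ) : ℂ)) * f (max y0 (min p.2 y1))) := by
      refine Continuous.if_le hFm hG continuous_snd continuous_const ?_
      intro p hp
      rw [hp, if_neg (not_le.mpr h01)]
      simp only [sub_self, mul_zero, sub_zero, min_eq_left h01.le, max_self, hT2]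
      ring
    have heq : (fun p : ℝ × ℝ => u p.1 p.2) = fun p : ℝ × ℝ =>
        if p.2 ≤ y0 then
          P * (T2 * Complex.exp (Complex.I * ((α * p.1 - βm * (p.2 - y0) : ℝ) : ℂ)))
        else if y1 ≤ p.2 then
          P * (Complex.exp (Complex.I * ((α * p.1 : ℝ) : ℂ)) *
            (Complex.exp (-Complex.I * ((βp * (p.2 - y1) : ℝ) : ℂ)) +
              R2 * Complex.exp (Complex.I * ((βp * (p.2 - y1) : ℝ) : ℂ))))
        else P * (Complex.exp (Complex.I * ((α * p.1 : ℝ) : ℂ)) * f (max y0 (min p.2 y1))) := by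
      funext p
      by_cases h0 : p.2 ≤ y0
      · rw [if_pos h0, hubot p.1 p.2 h0]
      · rw [if_neg h0]
        by_cases h1' : y1 ≤ p.2
        · rw [if_pos h1', hutop p.1 p.2 h1']
        · rw [if_neg h1', humid p.1 p.2 (not_le.mp h0) (not_le.mp h1'),
            min_eq_left (not_le.mp h1').le, max_eq_right (not_le.mp h0).le]
    rw [heq]; exact hcont
  · -- (ii) interface y0
    intro x
    refine ⟨P * Complex.exp (Complex.I * ((α * x : ℝ) : ℂ)) * f' y0, ?_, ?_⟩
    · -- from above: middle region
      have h1 : Tendsto (fun y => P * Complex.exp (Complex.I * ((α * x : ℝ) : ℂ)) * f' y)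
          (nhdsWithin y0 (Ioi y0))
          (nhds (P * Complex.exp (Complex.I * ((α * x : ℝ) : ℂ)) * f' y0)) := by
        exact (((hf'' y0 ⟨le_refl _, h01.le⟩).continuousAt.tendsto).const_mul _).mono_left
          nhdsWithin_le_nhds
      refine h1.congr' ?_
      filter_upwards [Ioo_mem_nhdsGT_of_mem ⟨le_refl y0, h01⟩] with y hy
      exact ((hmidd x y hy).deriv).symm
    · -- from below: bottom region
      have hc : Continuous fun y : ℝ => P * (T2 * (Complex.I * ((-βm : ℝ) : ℂ) *
          Complex.exp (Complex.I * ((α * x - βm * (y - y0) : ℝ) : ℂ)))) := by fun_prop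
      have h1 := (hc.tendsto y0).mono_left
        (nhdsWithin_le_nhds : nhdsWithin y0 (Iio y0) ≤ nhds y0)
      have hval : P * (T2 * (Complex.I * ((-βm : ℝ) : ℂ) *
          Complex.exp (Complex.I * ((α * x - βm * (y0 - y0) : ℝ) : ℂ)))) =
          P * Complex.exp (Complex.I * ((α * x : ℝ) : ℂ)) * f' y0 := by
        rw [hbc0, hT2]
        simp only [sub_self, mul_zero, sub_zero]
        push_cast
        ring
      rw [hval] at h1
      refine h1.congr' ?_
      filter_upwards [self_mem_nhdsWithin] with y hy
      exact ((hbotd x y hy).deriv).symm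
  · -- (ii) interface y1
    intro x
    refine ⟨P * Complex.exp (Complex.I * ((α * x : ℝ) : ℂ)) * f' y1, ?_, ?_⟩
    · -- from above: top region
      have hc : Continuous fun y : ℝ => P * (Complex.exp (Complex.I * ((α * x : ℝ) : ℂ)) *
          (-Complex.I * (βp : ℂ) * Complex.exp (-Complex.I * ((βp * (y - y1) : ℝ) : ℂ)) +
            R2 * (Complex.I * (βp : ℂ) *
              Complex.exp (Complex.I * ((βp * (y - y1) : ℝ) : ℂ))))) := by fun_prop
      have h1 := (hc.tendsto y1).mono_left
        (nhdsWithin_le_nhds : nhdsWithin y1 (Ioi y1) ≤ nhds y1)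
      have hval : P * (Complex.exp (Complex.I * ((α * x : ℝ) : ℂ)) *
          (-Complex.I * (βp : ℂ) * Complex.exp (-Complex.I * ((βp * (y1 - y1) : ℝ) : ℂ)) +
            R2 * (Complex.I * (βp : ℂ) *
              Complex.exp (Complex.I * ((βp * (y1 - y1) : ℝ) : ℂ))))) =
          P * Complex.exp (Complex.I * ((α * x : ℝ) : ℂ)) * f' y1 := by
        rw [hbc1, hR2]
        simp only [sub_self, mul_zero, Complex.ofReal_zero, Complex.exp_zero, mul_one]
        ring
      rw [hval] at h1
      refine h1.congr' ?_
      filter_upwards [self_mem_nhdsWithin] with y hy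
      exact ((htopd x y hy).deriv).symm
    · -- from below: middle region
      have h1 : Tendsto (fun y => P * Complex.exp (Complex.I * ((α * x : ℝ) : ℂ)) * f' y)
          (nhdsWithin y1 (Iio y1))
          (nhds (P * Complex.exp (Complex.I * ((α * x : ℝ) : ℂ)) * f' y1)) := by
        exact (((hf'' y1 ⟨h01.le, le_refl _⟩).continuousAt.tendsto).const_mul _).mono_left
          nhdsWithin_le_nhds
      refine h1.congr' ?_
      filter_upwards [Ioo_mem_nhdsLT_of_mem ⟨h01, le_refl y1⟩] with y hy
      exact ((hmidd x y hy).deriv).symm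
  · -- (iii) top region
    intro x y hy
    have hX : iteratedDeriv 2 (fun t => u t y) x =
        P * (Complex.I * (α : ℂ) * (Complex.I * (α : ℂ) *
          Complex.exp (Complex.I * ((α * x : ℝ) : ℂ))) *
          (Complex.exp (-Complex.I * ((βp * (y - y1) : ℝ) : ℂ)) +
            R2 * Complex.exp (Complex.I * ((βp * (y - y1) : ℝ) : ℂ)))) := by
      refine iteratedDeriv2_eq (g1 := fun t =>
        P * (Complex.I * (α : ℂ) * Complex.exp (Complex.I * ((α * t : ℝ) : ℂ)) *
          (Complex.exp (-Complex.I * ((βp * (y - y1) : ℝ) : ℂ)) +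
            R2 * Complex.exp (Complex.I * ((βp * (y - y1) : ℝ) : ℂ))))) ?_ ?_
      · refine Filter.Eventually.of_forall fun t => ?_
        have h := (((hex x t).mul_const
          (Complex.exp (-Complex.I * ((βp * (y - y1) : ℝ) : ℂ)) +
            R2 * Complex.exp (Complex.I * ((βp * (y - y1) : ℝ) : ℂ)))).const_mul P)
        refine h.congr_of_eventuallyEq ?_
        exact Filter.Eventually.of_forall fun s => show u s y = _ by rw [hutop s y hy.le]
      · exact ((((hex x x).const_mul (Complex.I * (α : ℂ))).mul_const _).const_mul P)
    have hY : iteratedDeriv 2 (fun t => u x t) y =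
        P * (Complex.exp (Complex.I * ((α * x : ℝ) : ℂ)) *
          (-Complex.I * (βp : ℂ) * (-Complex.I * (βp : ℂ) *
            Complex.exp (-Complex.I * ((βp * (y - y1) : ℝ) : ℂ))) +
            R2 * (Complex.I * (βp : ℂ) * (Complex.I * (βp : ℂ) *
              Complex.exp (Complex.I * ((βp * (y - y1) : ℝ) : ℂ)))))) := by
      refine iteratedDeriv2_eq (g1 := fun t =>
        P * (Complex.exp (Complex.I * ((α * x : ℝ) : ℂ)) *
          (-Complex.I * (βp : ℂ) * Complex.exp (-Complex.I * ((βp * (t - y1) : ℝ) : ℂ)) +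
            R2 * (Complex.I * (βp : ℂ) *
              Complex.exp (Complex.I * ((βp * (t - y1) : ℝ) : ℂ)))))) ?_ ?_
      · filter_upwards [Ioi_mem_nhds hy] with t ht
        exact htopd x t ht
      · exact ((((hE1 y).const_mul (-Complex.I * (βp : ℂ))).add
          (((hE2 y).const_mul (Complex.I * (βp : ℂ))).const_mul R2)).const_mul
          (Complex.exp (Complex.I * ((α * x : ℝ) : ℂ)))).const_mul P
    rw [hX, hY, hutop x y hy.le, hcp]
    set E1 := Complex.exp (-Complex.I * ((βp * (y - y1) : ℝ) : ℂ))
    set E2 := Complex.exp (Complex.I * ((βp * (y - y1) : ℝ) : ℂ))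
    set Ex := Complex.exp (Complex.I * ((α * x : ℝ) : ℂ))
    linear_combination (P * Ex * (E1 + R2 * E2) * ((α : ℂ) ^ 2 + (βp : ℂ) ^ 2)) * Complex.I_sq
  · -- (iii) middle region
    intro x y hy0' hy1'
    have hyI : y ∈ Icc y0 y1 := ⟨hy0'.le, hy1'.le⟩
    have hX : iteratedDeriv 2 (fun t => u t y) x =
        P * (Complex.I * (α : ℂ) * (Complex.I * (α : ℂ) *
          Complex.exp (Complex.I * ((α * x : ℝ) : ℂ))) * f y) := by
      refine iteratedDeriv2_eq (g1 := fun t =>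
        P * (Complex.I * (α : ℂ) * Complex.exp (Complex.I * ((α * t : ℝ) : ℂ)) * f y)) ?_ ?_
      · refine Filter.Eventually.of_forall fun t => ?_
        refine (((hex x t).mul_const (f y)).const_mul P).congr_of_eventuallyEq ?_
        exact Filter.Eventually.of_forall fun s => show u s y = _ by rw [humid s y hy0' hy1']
      · exact ((((hex x x).const_mul (Complex.I * (α : ℂ))).mul_const (f y)).const_mul P)
    have hY : iteratedDeriv 2 (fun t => u x t) y =
        P * Complex.exp (Complex.I * ((α * x : ℝ) : ℂ)) * f'' y := by
      refine iteratedDeriv2_eq (g1 := fun t =>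
        P * Complex.exp (Complex.I * ((α * x : ℝ) : ℂ)) * f' t) ?_ ?_
      · filter_upwards [Ioo_mem_nhds hy0' hy1'] with t ht
        exact hmidd x t ht
      · exact (hf'' y hyI).const_mul _
    have hode' : f'' y = -(((k0 ^ 2 * εt y : ℝ) : ℂ)) * f y + ((α : ℂ)) ^ 2 * f y := by
      have h := hode y hyI
      push_cast at h ⊢
      linear_combination h
    rw [hX, hY, humid x y hy0' hy1']
    set Ex := Complex.exp (Complex.I * ((α * x : ℝ) : ℂ))
    linear_combination (P * Ex * f y * (α : ℂ) ^ 2) * Complex.I_sq + (P * Ex) * hode'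
  · -- (iii) bottom region
    intro x y hy
    have hX : iteratedDeriv 2 (fun t => u t y) x =
        P * (T2 * (Complex.I * (α : ℂ) * (Complex.I * (α : ℂ) *
          Complex.exp (Complex.I * ((α * x - βm * (y - y0) : ℝ) : ℂ))))) := by
      have hdx : ∀ t : ℝ, HasDerivAt
          (fun t : ℝ => Complex.exp (Complex.I * ((α * t - βm * (y - y0) : ℝ) : ℂ)))
          (Complex.I * (α : ℂ) *
            Complex.exp (Complex.I * ((α * t - βm * (y - y0) : ℝ) : ℂ))) t := by
        intro t
        refine hd_cexp Complex.I ?_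
        simpa using ((hasDerivAt_id t).const_mul α).sub_const (βm * (y - y0))
      refine iteratedDeriv2_eq (g1 := fun t =>
        P * (T2 * (Complex.I * (α : ℂ) *
          Complex.exp (Complex.I * ((α * t - βm * (y - y0) : ℝ) : ℂ))))) ?_ ?_
      · refine Filter.Eventually.of_forall fun t => ?_
        refine (((hdx t).const_mul T2).const_mul P).congr_of_eventuallyEq ?_
        exact Filter.Eventually.of_forall fun s => show u s y = _ from hubot s y hy.le
      · exact ((((hdx x).const_mul (Complex.I * (α : ℂ))).const_mul T2).const_mul P)
    have hY : iteratedDeriv 2 (fun t => u x t) y =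
        P * (T2 * (Complex.I * ((-βm : ℝ) : ℂ) * (Complex.I * ((-βm : ℝ) : ℂ) *
          Complex.exp (Complex.I * ((α * x - βm * (y - y0) : ℝ) : ℂ))))) := by
      refine iteratedDeriv2_eq (g1 := fun t =>
        P * (T2 * (Complex.I * ((-βm : ℝ) : ℂ) *
          Complex.exp (Complex.I * ((α * x - βm * (t - y0) : ℝ) : ℂ))))) ?_ ?_
      · filter_upwards [Iio_mem_nhds hy] with t ht
        exact hbotd x t ht
      · exact (((hEm x y).const_mul (Complex.I * ((-βm : ℝ) : ℂ))).const_mul T2).const_mul P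
    rw [hX, hY, hubot x y hy.le, hcm]
    set Em := Complex.exp (Complex.I * ((α * x - βm * (y - y0) : ℝ) : ℂ))
    push_cast
    linear_combination (P * T2 * Em * ((α : ℂ) ^ 2 + (βm : ℂ) ^ 2)) * Complex.I_sq
end

section
/- Let $L > 0$, $d > 0$, $\sigma > 0$ be real numbers, let $k^* \in \mathbb{C}$, and let $c^1, c^2 \in \mathbb{C}$. Define $\phi : \mathbb{R} \to \mathbb{C}$ by $\phi(y) = c^1 e^{i k^*(1 + i\sigma)(y - L/2)} + c^2 e^{-i k^*(1 + i\sigma)(y - L/2)}$. Then: (i) $\phi(L/2 + d) = 0$ if and only if $c^2 = -c^1 e^{2 i k^* d (1 + i\sigma)}$; and (ii) if $c^2 = -c^1 e^{2 i k^* d (1 + i\sigma)}$, then $\frac{1}{1 + i\sigma}\,\phi'(L/2)\,\overline{\phi(L/2)} = |c^1|^2\Big[\big(1 - e^{-4d(\mathrm{Im}(k^*) + \sigma\,\mathrm{Re}(k^*))}\big)\, i k^* \; - \; 2 k^*\, e^{-2d(\mathrm{Im}(k^*) + \sigma\,\mathrm{Re}(k^*))}\,\sin\!\big(2d(\mathrm{Re}(k^*)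 - \sigma\,\mathrm{Im}(k^*))\big)\Big].$ -/
open Complex ComplexConjugate

/-- The explicit PML boundary-flux computation (A.2): the zero Dirichlet
condition at the outer PML boundary forces the reflection relation
`c² = -c¹ e^{2ik*d(1+iσ)}`, and then the flux `(1+iσ)⁻¹ φ'(L/2) conj(φ(L/2))`
has the stated closed form. -/
theorem pml_flux_formula
    (L d σ : ℝ) (hL : 0 < L) (hd : 0 < d) (hσ : 0 < σ)
    (k : ℂ) (c1 c2 : ℂ) (φ : ℝ → ℂ)
    (hφ : φ = fun y =>
      c1 * Complex.exp (Complex.I * k * (1 + Complex.I * σ) * ((y - L / 2 : ℝ) : ℂ)) +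
      c2 * Complex.exp (-(Complex.I * k * (1 + Complex.I * σ)) * ((y - L / 2 : ℝ) : ℂ))) :
    (φ (L / 2 + d) = 0 ↔ c2 = -c1 * Complex.exp (2 * Complex.I * k * d * (1 + Complex.I * σ))) ∧
    (c2 = -c1 * Complex.exp (2 * Complex.I * k * d * (1 + Complex.I * σ)) →
      (1 / (1 + Complex.I * σ)) * deriv φ (L / 2) * conj (φ (L / 2)) =
        ((‖c1‖ : ℝ) : ℂ) ^ 2 *
          (((1 - Real.exp (-4 * d * (k.im + σ * k.re)) : ℝ) : ℂ) * (Complex.I * k) -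
            2 * k * ((Real.exp (-2 * d * (k.im + σ * k.re)) : ℝ) : ℂ) *
              ((Real.sin (2 * d * (k.re - σ * k.im)) : ℝ) : ℂ))) := by
  have h1σ : (1 + Complex.I * (σ:ℂ)) ≠ 0 := by
    intro h
    have := congrArg Complex.im h
    simp at this
    exact hσ.ne' this
  set B : ℂ := Complex.I * k * (1 + Complex.I * (σ:ℂ)) with hB
  have hd2 : ((L/2 + d - L/2 : ℝ) : ℂ) = (d:ℂ) := by push_cast; ring
  have h0 : ((L/2 - L/2 : ℝ) : ℂ) = 0 := by push_cast; ring
  have hexp2 : Complex.exp (2 * Complex.I * k * d * (1 + Complex.I * σ))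
      = Complex.exp (B * d) * Complex.exp (B * d) := by
    rw [← Complex.exp_add]; congr 1; rw [hB]; ring
  have hEne : Complex.exp (B * d) ≠ 0 := Complex.exp_ne_zero _
  constructor
  · rw [hφ]
    simp only [hd2]
    rw [hexp2, neg_mul, Complex.exp_neg]
    constructor
    · intro h
      field_simp at h
      linear_combination h
    · intro h
      rw [h]
      field_simp
      ring
  · intro hc2
    subst hc2
    have hder : HasDerivAt φ (c1 * B + (-c1 * Complex.exp (2 * Complex.I * k * d * (1 + Complex.I * σ))) * (-B)) (L/2) := by
      rw [hφ]
      have hf : HasDerivAt (fun y : ℝ => ((y - L/2 : ℝ) : ℂ)) 1 (L/2) := by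
        have : HasDerivAt (fun y : ℝ => (y - L/2 : ℝ)) 1 (L/2) := by
          simpa using (hasDerivAt_id (L/2)).sub_const (L/2)
        simpa using this.ofReal_comp
      have h1 : HasDerivAt (fun y : ℝ => Complex.exp (B * ((y - L/2 : ℝ) : ℂ))) B (L/2) := by
        have := ((hf.const_mul B).cexp)
        simpa [h0] using this
      have h2 : HasDerivAt (fun y : ℝ => Complex.exp (-B * ((y - L/2 : ℝ) : ℂ))) (-B) (L/2) := by
        have := ((hf.const_mul (-B)).cexp)
        simpa [h0] using this
      have := (h1.const_mul c1).add (h2.const_mul (-c1 * Complex.exp (2 * Complex.I * k * d * (1 + Complex.I * σ))))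
      simpa [hB, mul_comm, mul_assoc, mul_left_comm, Pi.add_def] using this
    rw [hder.deriv]
    have hφL : φ (L/2) = c1 + (-c1 * Complex.exp (2 * Complex.I * k * d * (1 + Complex.I * σ))) := by
      rw [hφ]; simp [h0]
    rw [hφL]
    have hz : 2 * Complex.I * k * (d:ℂ) * (1 + Complex.I * (σ:ℂ))
        = ((-2 * d * (k.im + σ * k.re) : ℝ) : ℂ) + ((2 * d * (k.re - σ * k.im) : ℝ) : ℂ) * Complex.I := by
      rw [Complex.ext_iff]
      constructor <;>
        simp [Complex.mul_re, Complex.mul_im, Complex.add_re, Complex.add_im] <;> ring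
    have hE : Complex.exp (2 * Complex.I * k * d * (1 + Complex.I * σ))
        = ((Real.exp (-2 * d * (k.im + σ * k.re)) : ℝ) : ℂ) *
            ((Real.cos (2 * d * (k.re - σ * k.im)) : ℂ) + (Real.sin (2 * d * (k.re - σ * k.im)) : ℂ) * Complex.I) := by
      rw [hz, Complex.exp_add, Complex.exp_mul_I, ← Complex.ofReal_exp, ← Complex.ofReal_cos,
        ← Complex.ofReal_sin]
    have hR2 : Real.exp (-4 * d * (k.im + σ * k.re))
        = Real.exp (-2 * d * (k.im + σ * k.re)) * Real.exp (-2 * d * (k.im + σ * k.re)) := by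
      rw [← Real.exp_add]; ring_nf
    have habs : ((‖c1‖ : ℝ) : ℂ) ^ 2 = c1 * conj c1 := by
      rw [show ((‖c1‖ : ℝ) : ℂ) ^ 2 = ((‖c1‖ ^ 2 : ℝ) : ℂ) by push_cast; ring,
        Complex.sq_norm, Complex.mul_conj]
    have hsc0 := Real.sin_sq_add_cos_sq (2 * d * (k.re - σ * k.im))
    rw [hE, hR2, habs]
    generalize hSg : Real.sin (2 * d * (k.re - σ * k.im)) = S at hsc0 ⊢
    generalize hCg : Real.cos (2 * d * (k.re - σ * k.im)) = C at hsc0 ⊢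
    generalize hRg : Real.exp (-2 * d * (k.im + σ * k.re)) = R
    have hscC : (S:ℂ) ^ 2 + (C:ℂ) ^ 2 = 1 := by exact_mod_cast hsc0
    simp only [map_add, map_mul, map_neg, map_one, Complex.conj_ofReal, Complex.conj_I, hB,
      Complex.ofReal_sub, Complex.ofReal_mul, Complex.ofReal_one]
    field_simp
    linear_combination (-(1 + Complex.I * (σ:ℂ)) * Complex.I * k * (c1 * conj c1) * ((R:ℂ))^2) * hscC +
      ((1 + Complex.I * (σ:ℂ)) * k * (c1 * conj c1) *
        (2 * (R:ℂ) * (S:ℂ) + Complex.I * (R:ℂ)^2 * (S:ℂ)^2)) * Complex.I_sq +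
      ((σ:ℂ) * c1 * k * conj c1 * (R:ℂ) * (Complex.I ^ 2 * (R:ℂ))) * hscC +
      ((σ:ℂ) * c1 * k * conj c1 * (R:ℂ) * (-2 * Complex.I * (S:ℂ) - Complex.I ^ 2 * (R:ℂ) * (S:ℂ)^2)) * Complex.I_sq
end

section
/- Let $L > 0$, $d > 0$, $\sigma > 0$ be real, and let $k^* \in \mathbb{C}$ with $\mathrm{Re}(k^*) \geq 0$ and $\mathrm{Im}(k^*) \geq 0$. Let $c^1 \in \mathbb{C}$, set $c^2 = -c^1 e^{2ik^*d(1+i\sigma)}$, and define $\phi(y) = c^1 e^{ik^*(1+i\sigma)(y - L/2)} + c^2 e^{-ik^*(1+i\sigma)(y - L/2)}$. Then $\mathrm{Re}\Big(\frac{1}{1+i\sigma}\,\phi'(L/2)\,\overline{\phi(L/2)}\Big) \leq |c^1|^2\Big[-\big(1 - e^{-4d(\mathrm{Im}(k^*) + \sigma\,\mathrm{Re}(k^*))}\big)\,\mathrm{Im}(k^*) + 2\,\mathrm{Re}(k^*)\Big].$ -/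
open Complex ComplexConjugate

/-- The real-part estimate for the PML boundary flux used in the proof of
Proposition A.1. -/
theorem pml_flux_real_part_estimate
    (L d σ : ℝ) (hL : 0 < L) (hd : 0 < d) (hσ : 0 < σ)
    (k : ℂ) (hkre : 0 ≤ k.re) (hkim : 0 ≤ k.im)
    (c1 c2 : ℂ) (hc2 : c2 = -c1 * Complex.exp (2 * Complex.I * k * d * (1 + Complex.I * σ)))
    (φ : ℝ → ℂ)
    (hφ : φ = fun y =>
      c1 * Complex.exp (Complex.I * k * (1 + Complex.I * σ) * ((y - L / 2 : ℝ) : ℂ)) +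
      c2 * Complex.exp (-(Complex.I * k * (1 + Complex.I * σ)) * ((y - L / 2 : ℝ) : ℂ))) :
    ((1 / (1 + Complex.I * σ)) * deriv φ (L / 2) * conj (φ (L / 2))).re ≤
      ‖c1‖ ^ 2 *
        (-((1 - Real.exp (-4 * d * (k.im + σ * k.re))) * k.im) + 2 * k.re) := by
  set A : ℂ := Complex.I * k * (1 + Complex.I * σ) with hA
  -- derivative
  have hg : HasDerivAt (fun z : ℂ => c1 * Complex.exp (A * (z - L/2)) +
      c2 * Complex.exp (-A * (z - L/2))) (A * (c1 - c2)) ((L/2 : ℝ) : ℂ) := by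
    have h1 : HasDerivAt (fun z : ℂ => A * (z - L/2)) A ((L/2 : ℝ) : ℂ) := by
      simpa using ((hasDerivAt_id ((L/2:ℝ):ℂ)).sub_const ((L:ℂ)/2)).const_mul A
    have h1' : HasDerivAt (fun z : ℂ => -A * (z - L/2)) (-A) ((L/2 : ℝ) : ℂ) := by
      simpa using ((hasDerivAt_id ((L/2:ℝ):ℂ)).sub_const ((L:ℂ)/2)).const_mul (-A)
    have h2 := (h1.cexp.const_mul c1).add (h1'.cexp.const_mul c2)
    refine HasDerivAt.congr_deriv h2 ?_
    simp [Complex.exp_zero]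
    ring
  have hgφ : φ = fun y : ℝ => c1 * Complex.exp (A * ((y:ℂ) - L/2)) +
      c2 * Complex.exp (-A * ((y:ℂ) - L/2)) := by
    rw [hφ]; funext y; push_cast; ring_nf
  have hderiv : deriv φ (L/2) = A * (c1 - c2) := by
    rw [hgφ]; exact hg.comp_ofReal.deriv
  have hval : φ (L/2) = c1 + c2 := by
    rw [hφ]; simp
  rw [hderiv, hval]
  have hne : (1 + Complex.I * σ : ℂ) ≠ 0 := by
    intro h
    have := congrArg Complex.im h
    simp at this
    linarith
  set E : ℂ := Complex.exp (2 * Complex.I * k * d * (1 + Complex.I * σ)) with hE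
  have hphase : (1 / (1 + Complex.I * σ)) * (A * (c1 - c2)) * conj (c1 + c2) =
      (Complex.normSq c1 : ℂ) * (Complex.I * k * (1 + E) * (1 - conj E)) := by
    rw [hc2, hA]
    rw [map_add, map_mul, map_neg]
    field_simp
    linear_combination (k * (1 + E) * (1 - conj E)) * Complex.mul_conj c1
  rw [hphase]
  rw [← Complex.sq_norm c1] at *
  have hre : ((Complex.normSq c1 : ℂ) * (Complex.I * k * (1 + E) * (1 - conj E))).re
      = Complex.normSq c1 * (Complex.I * k * (1 + E) * (1 - conj E)).re := by
    simp
  rw [Complex.sq_norm c1, hre]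
  apply mul_le_mul_of_nonneg_left _ (Complex.normSq_nonneg c1)
  have harg : (2 * Complex.I * k * (d:ℂ) * (1 + Complex.I * (σ:ℝ))) =
      Complex.ofReal (-2*d*(k.im+σ*k.re)) + Complex.ofReal (2*d*(k.re - σ*k.im)) * Complex.I := by
    apply Complex.ext <;> simp <;> ring
  have hEre : E.re = Real.exp (-2*d*(k.im+σ*k.re)) * Real.cos (2*d*(k.re-σ*k.im)) := by
    rw [hE, harg, Complex.exp_re]; simp
  have hEim : E.im = Real.exp (-2*d*(k.im+σ*k.re)) * Real.sin (2*d*(k.re-σ*k.im)) := by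
    rw [hE, harg, Complex.exp_im]; simp
  set r := Real.exp (-2*d*(k.im+σ*k.re)) with hrdef
  set θ := 2*d*(k.re-σ*k.im) with hθdef
  have hr2 : Real.exp (-4*d*(k.im+σ*k.re)) = r * r := by
    rw [hrdef, ← Real.exp_add]; ring_nf
  have hr0 : 0 < r := Real.exp_pos _
  have hr1 : r ≤ 1 := Real.exp_le_one_iff.mpr (by nlinarith [mul_nonneg hd.le hkim, mul_nonneg (mul_nonneg hd.le hσ.le) hkre])
  have hsc := Real.sin_sq_add_cos_sq θ
  have hs1 := Real.sin_le_one θ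
  have hs2 := Real.neg_one_le_sin θ
  have key : 0 ≤ k.re * (1 + r * Real.sin θ) := by
    apply mul_nonneg hkre
    nlinarith [mul_le_mul_of_nonneg_left hs2 hr0.le]
  simp only [Complex.mul_re, Complex.mul_im, Complex.add_re, Complex.add_im,
    Complex.sub_re, Complex.sub_im, Complex.one_re, Complex.one_im,
    Complex.I_re, Complex.I_im, Complex.conj_re, Complex.conj_im,
    hEre, hEim, hr2]
  have hb : k.im * (r*r) * (Real.sin θ^2 + Real.cos θ^2) = k.im * (r*r) := by rw [hsc]; ring
  nlinarith [key, hb]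
end
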